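/- Uniform density bound for multi-measurement posteriors: Assume ρ satisfies (N.1)–(N.3), let μ_prior be a Borel probability measure on a separable Banach space X, and let L_1, …, L_j : X → ℝ^d be Borel measurable with ‖L_k‖_{L²(μ_prior)} < ∞ for each k. There exists a constant C > 0, depending only on ρ, such that for all y_{1:j} = (y_1,…,y_j) ∈ (ℝ^d)^j: Z_j(y_{1:j}) ≥ C^{−j} exp( −Σ_{k=1}^j |y_k|_Γ² − Σ_{k=1}^j ‖L_k‖²_{L²(μ_prior)} ), and for every ū ∈ X: Π_{k=1}^j ρ(y_k − L_k(ū)) / Z_j(y_{1:j}) ≤ C^{j} exp( Σ_{k=1}^j |y_k|_Γ² + Σ_{k=1}^j ‖L_k‖²_{L²(μ_prior)} ). -/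
import Mathlib


open MeasureTheory
open scoped BigOperators ENNReal Matrix

noncomputable section

/-- The Γ-weighted norm `|y|_Γ = sqrt ⟨y, Γ⁻¹ y⟩` on `ℝ^d`. -/
def gammaNorm {d : ℕ} (Γ : Matrix (Fin d) (Fin d) ℝ) (y : Fin d → ℝ) : ℝ :=
  Real.sqrt (y ⬝ᵥ (Γ⁻¹).mulVec y)

/-- A noise density satisfying (N.1)–(N.3). -/
structure IsNoiseDensity {d : ℕ} (Γ : Matrix (Fin d) (Fin d) ℝ) (ρ : (Fin d → ℝ) → ℝ)
    (Lρ Cb Ct : ℝ) : Prop where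
  Lρ_pos : 0 < Lρ
  Cb_pos : 0 < Cb
  Ct_pos : 0 < Ct
  pos : ∀ y, 0 < ρ y
  lip : ∀ y y', |ρ y - ρ y'| ≤ Lρ * gammaNorm Γ (y - y')
  bdd : ∀ y, ρ y ≤ Cb
  tail : ∀ y, Ct⁻¹ * Real.exp (-(1 / 2) * (gammaNorm Γ y) ^ 2) ≤ ρ y

/-- Normalization constant `Z_j(y_{1:j}) = ∫ Π_k ρ(y_k − L_k(ū)) dμ_prior`. -/
def multiZ {X : Type*} [MeasurableSpace X] {d j : ℕ} (μp : Measure X)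
    (ρ : (Fin d → ℝ) → ℝ) (L : Fin j → X → Fin d → ℝ) (y : Fin j → Fin d → ℝ) : ℝ :=
  ∫ u, ∏ k, ρ (y k - L k u) ∂μp

section Aux

variable {d : ℕ} {Γ : Matrix (Fin d) (Fin d) ℝ}

lemma quad_nonneg (hΓ : Γ.PosDef) (x : Fin d → ℝ) : 0 ≤ x ⬝ᵥ (Γ⁻¹).mulVec x := by
  simpa using (hΓ.inv.posSemidef).re_dotProduct_nonneg x

lemma gammaNorm_sq (hΓ : Γ.PosDef) (x : Fin d → ℝ) :
    gammaNorm Γ x ^ 2 = x ⬝ᵥ (Γ⁻¹).mulVec x :=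
  Real.sq_sqrt (quad_nonneg hΓ x)

lemma gammaNorm_sub_sq_le (hΓ : Γ.PosDef) (a b : Fin d → ℝ) :
    gammaNorm Γ (a - b) ^ 2 ≤ 2 * gammaNorm Γ a ^ 2 + 2 * gammaNorm Γ b ^ 2 := by
  have h := quad_nonneg hΓ (a + b)
  rw [gammaNorm_sq hΓ, gammaNorm_sq hΓ, gammaNorm_sq hΓ]
  simp only [Matrix.mulVec_add, Matrix.mulVec_sub, sub_dotProduct,
    add_dotProduct, dotProduct_add, dotProduct_sub] at *
  linarith

lemma continuous_gammaNorm : Continuous (gammaNorm Γ) := by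
  apply Real.continuous_sqrt.comp
  simp only [dotProduct, Matrix.mulVec]
  exact continuous_finset_sum _ fun i _ => (continuous_apply i).mul
    (continuous_finset_sum _ fun l _ => continuous_const.mul (continuous_apply l))

lemma noise_continuous {ρ : (Fin d → ℝ) → ℝ} {Lρ Cb Ct : ℝ}
    (h : IsNoiseDensity Γ ρ Lρ Cb Ct) : Continuous ρ := by
  rw [continuous_iff_continuousAt]
  intro y0
  have h1 : Filter.Tendsto (fun y => ρ y - ρ y0) (nhds y0) (nhds 0) := by
    apply squeeze_zero_norm (fun y => by simpa using h.lip y y0)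
    have hc : Continuous fun y => Lρ * gammaNorm Γ (y - y0) :=
      continuous_const.mul (continuous_gammaNorm.comp (continuous_id.sub continuous_const))
    have := hc.tendsto y0
    simpa [gammaNorm] using this
  have := h1.add (tendsto_const_nhds (x := ρ y0))
  simpa [ContinuousAt] using this

end Aux

/-- **Uniform density bound for multi-measurement Bayesian posteriors**, with a
constant depending only on the noise density `ρ`. -/
theorem multi_measurement_density_bound
    {X : Type*} [NormedAddCommGroup X] [NormedSpace ℝ X] [CompleteSpace X]
    [TopologicalSpace.SeparableSpace X] [MeasurableSpace X] [BorelSpace X]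
    {d : ℕ}
    (Γ : Matrix (Fin d) (Fin d) ℝ) (hΓ : Γ.PosDef)
    (ρ : (Fin d → ℝ) → ℝ) (Lρ Cb Ct : ℝ) (hρ : IsNoiseDensity Γ ρ Lρ Cb Ct) :
    ∃ C > 0, ∀ (j : ℕ) (μp : Measure X), IsProbabilityMeasure μp →
      ∀ L : Fin j → X → Fin d → ℝ, (∀ k, Measurable (L k)) →
        (∀ k, Integrable (fun u => (gammaNorm Γ (L k u)) ^ 2) μp) →
      ∀ y : Fin j → Fin d → ℝ,
        (C ^ j)⁻¹ *
            Real.exp (-(∑ k, (gammaNorm Γ (y k)) ^ 2)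
              - ∑ k, ∫ u, (gammaNorm Γ (L k u)) ^ 2 ∂μp)
          ≤ multiZ μp ρ L y ∧
        ∀ u : X,
          (∏ k, ρ (y k - L k u)) / multiZ μp ρ L y
            ≤ C ^ j *
              Real.exp ((∑ k, (gammaNorm Γ (y k)) ^ 2)
                + ∑ k, ∫ v, (gammaNorm Γ (L k v)) ^ 2 ∂μp) := by
  have hCb := hρ.Cb_pos
  have hCt := hρ.Ct_pos
  have hρcont : Continuous ρ := noise_continuous hρ
  refine ⟨Ct * (Cb + 1), by positivity, ?_⟩
  intro j μp hμp L hLm hLi y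
  set C := Ct * (Cb + 1) with hCdef
  set E := ∑ k, gammaNorm Γ (y k) ^ 2 with hE
  set M := ∑ k, ∫ u, gammaNorm Γ (L k u) ^ 2 ∂μp with hM
  set S : X → ℝ := fun u => ∑ k, gammaNorm Γ (L k u) ^ 2 with hSdef
  have hEnn : 0 ≤ E := Finset.sum_nonneg fun k _ => sq_nonneg _
  have hSnn : ∀ u, 0 ≤ S u := fun u => Finset.sum_nonneg fun k _ => sq_nonneg _
  have hSmeas : Measurable S :=
    Finset.measurable_sum _ fun k _ =>
      (((continuous_gammaNorm (Γ := Γ)).pow 2).measurable).comp (hLm k)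
  have hSint : Integrable S μp := integrable_finset_sum _ fun k _ => hLi k
  have hMS : ∫ u, S u ∂μp = M := by
    rw [hM]; exact integral_finset_sum _ fun k _ => hLi k
  -- the product is measurable, nonnegative, bounded and integrable
  have hprod_meas : Measurable fun u => ∏ k, ρ (y k - L k u) :=
    Finset.measurable_prod _ fun k _ =>
      hρcont.measurable.comp (measurable_const.sub (hLm k))
  have hprod_nonneg : ∀ u, 0 ≤ ∏ k, ρ (y k - L k u) := fun u =>
    Finset.prod_nonneg fun k _ => (hρ.pos _).le
  have hprod_le : ∀ u, ∏ k, ρ (y k - L k u) ≤ Cb ^ j := fun u => by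
    calc ∏ k, ρ (y k - L k u) ≤ ∏ _k : Fin j, Cb :=
          Finset.prod_le_prod (fun k _ => (hρ.pos _).le) (fun k _ => hρ.bdd _)
      _ = Cb ^ j := by simp
  have hprod_int : Integrable (fun u => ∏ k, ρ (y k - L k u)) μp := by
    refine (integrable_const (Cb ^ j)).mono' hprod_meas.aestronglyMeasurable
      (Filter.Eventually.of_forall fun u => ?_)
    rw [Real.norm_eq_abs, abs_of_nonneg (hprod_nonneg u)]
    exact hprod_le u
  -- the auxiliary function exp(-S)
  have hgint : Integrable (fun u => Real.exp (-(S u))) μp := by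
    refine (integrable_const (1 : ℝ)).mono'
      ((Real.continuous_exp.measurable.comp hSmeas.neg).aestronglyMeasurable)
      (Filter.Eventually.of_forall fun u => ?_)
    rw [Real.norm_eq_abs, abs_of_nonneg (Real.exp_nonneg _)]
    exact Real.exp_le_one_iff.2 (by linarith [hSnn u])
  -- pointwise lower bound on the product
  have hkey : ∀ u, (Ct⁻¹ ^ j * Real.exp (-E)) * Real.exp (-(S u))
      ≤ ∏ k, ρ (y k - L k u) := by
    intro u
    have heq : (Ct⁻¹ ^ j * Real.exp (-E)) * Real.exp (-(S u))
        = ∏ k, (Ct⁻¹ * Real.exp (-(gammaNorm Γ (y k) ^ 2) - gammaNorm Γ (L k u) ^ 2)) := by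
      rw [Finset.prod_mul_distrib, Finset.prod_const, Finset.card_univ, Fintype.card_fin,
        ← Real.exp_sum, mul_assoc, ← Real.exp_add]
      congr 1
      have hsum : ∑ k, (-(gammaNorm Γ (y k) ^ 2) - gammaNorm Γ (L k u) ^ 2)
          = -(∑ k, gammaNorm Γ (y k) ^ 2) - ∑ k, gammaNorm Γ (L k u) ^ 2 := by
        rw [Finset.sum_sub_distrib, Finset.sum_neg_distrib]
      rw [hsum, ← hE]
      have hSu : (∑ k, gammaNorm Γ (L k u) ^ 2) = S u := rfl
      rw [hSu]
      congr 1
    rw [heq]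
    refine Finset.prod_le_prod (fun k _ => by positivity) (fun k _ => ?_)
    refine le_trans ?_ (hρ.tail (y k - L k u))
    apply mul_le_mul_of_nonneg_left _ (inv_nonneg.2 hCt.le)
    apply Real.exp_le_exp.2
    have := gammaNorm_sub_sq_le hΓ (y k) (L k u)
    linarith
  -- Jensen: exp(-M) ≤ ∫ exp(-S)
  have hJ : Real.exp (-M) ≤ ∫ u, Real.exp (-(S u)) ∂μp := by
    have hint1 : Integrable (fun u => Real.exp (-M) * ((1 + M) - S u)) μp :=
      ((integrable_const (1 + M)).sub hSint).const_mul _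
    have hpt : ∀ u, Real.exp (-M) * ((1 + M) - S u) ≤ Real.exp (-(S u)) := by
      intro u
      have h1 : (1 + M) - S u ≤ Real.exp (M - S u) := by
        have := Real.add_one_le_exp (M - S u)
        linarith
      calc Real.exp (-M) * ((1 + M) - S u) ≤ Real.exp (-M) * Real.exp (M - S u) :=
            mul_le_mul_of_nonneg_left h1 (Real.exp_nonneg _)
        _ = Real.exp (-(S u)) := by rw [← Real.exp_add]; ring_nf
    have h2 : ∫ u, Real.exp (-M) * ((1 + M) - S u) ∂μp = Real.exp (-M) := by
      rw [integral_const_mul, integral_sub (integrable_const _) hSint, integral_const,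
        hMS]
      simp
    calc Real.exp (-M) = ∫ u, Real.exp (-M) * ((1 + M) - S u) ∂μp := h2.symm
      _ ≤ ∫ u, Real.exp (-(S u)) ∂μp := integral_mono hint1 hgint hpt
  -- lower bound on Z
  have hZlb : Ct⁻¹ ^ j * Real.exp (-E) * Real.exp (-M) ≤ multiZ μp ρ L y := by
    have h1 : Ct⁻¹ ^ j * Real.exp (-E) * Real.exp (-M)
        ≤ Ct⁻¹ ^ j * Real.exp (-E) * ∫ u, Real.exp (-(S u)) ∂μp :=
      mul_le_mul_of_nonneg_left hJ (by positivity)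
    have h2 : Ct⁻¹ ^ j * Real.exp (-E) * ∫ u, Real.exp (-(S u)) ∂μp
        = ∫ u, (Ct⁻¹ ^ j * Real.exp (-E)) * Real.exp (-(S u)) ∂μp :=
      (integral_const_mul _ _).symm
    have h3 : ∫ u, (Ct⁻¹ ^ j * Real.exp (-E)) * Real.exp (-(S u)) ∂μp
        ≤ multiZ μp ρ L y :=
      integral_mono (hgint.const_mul _) hprod_int hkey
    linarith
  have hZpos : 0 < multiZ μp ρ L y :=
    lt_of_lt_of_le (by positivity) hZlb
  have hCtC : Ct ≤ C := le_mul_of_one_le_right hCt.le (by linarith)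
  constructor
  · -- lower bound claim
    have hCC : (C ^ j)⁻¹ ≤ Ct⁻¹ ^ j := by
      rw [← inv_pow]
      exact pow_le_pow_left₀ (by positivity) (inv_anti₀ hCt hCtC) j
    calc (C ^ j)⁻¹ * Real.exp (-E - M) ≤ Ct⁻¹ ^ j * Real.exp (-E - M) :=
          mul_le_mul_of_nonneg_right hCC (Real.exp_nonneg _)
      _ = Ct⁻¹ ^ j * Real.exp (-E) * Real.exp (-M) := by
          rw [mul_assoc, ← Real.exp_add]; ring_nf
      _ ≤ multiZ μp ρ L y := hZlb
  · -- upper bound claim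
    intro u
    rw [div_le_iff₀ hZpos]
    have hmid : C ^ j * Real.exp (E + M) * (Ct⁻¹ ^ j * Real.exp (-E) * Real.exp (-M))
        = (Cb + 1) ^ j := by
      have hexp : Real.exp (E + M) * (Real.exp (-E) * Real.exp (-M)) = 1 := by
        rw [← Real.exp_add, ← Real.exp_add, show E + M + (-E + -M) = 0 by ring,
          Real.exp_zero]
      have hc : C * Ct⁻¹ = Cb + 1 := by
        rw [hCdef]; field_simp
      calc C ^ j * Real.exp (E + M) * (Ct⁻¹ ^ j * Real.exp (-E) * Real.exp (-M))
          = (C ^ j * Ct⁻¹ ^ j) * (Real.exp (E + M) * (Real.exp (-E) * Real.exp (-M))) := by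
            ring
        _ = (Cb + 1) ^ j := by rw [hexp, mul_one, ← mul_pow, hc]
    calc ∏ k, ρ (y k - L k u) ≤ Cb ^ j := hprod_le u
      _ ≤ (Cb + 1) ^ j := pow_le_pow_left₀ hCb.le (by linarith) j
      _ = C ^ j * Real.exp (E + M) * (Ct⁻¹ ^ j * Real.exp (-E) * Real.exp (-M)) := hmid.symm
      _ ≤ C ^ j * Real.exp (E + M) * multiZ μp ρ L y :=
          mul_le_mul_of_nonneg_left hZlb (by positivity)
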